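/- arXiv:1302.1999 — 2 statements merged into one kernel-verified Lean document; each statement's English description precedes it below -/
import Mathlib

section
/- The bivariate generating function of any stationary distribution of the exponentially-delayed-arrivals queue satisfies (1−ρ)·P(z,z) = (1−ρ+ρz)·P(0,z) for all complex z with |z| ≤ 1. -/
open scoped BigOperators

noncomputable section

/-- `b j l = C(l,j) p^j q^(l-j)` with `p = 1 - q`, and `b j l = 0` for `j > l`. -/
def binomB (q : ℝ) (j l : ℕ) : ℝ :=
  if j ≤ l then (Nat.choose l j : ℝ) * (1 - q) ^ j * q ^ (l - j) else 0

/-- Transition kernel of the chain on `ℕ × ℕ`: from `(n, l)` move to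
`(max (n-1) 0 + j, l + 1 - j)` with probability `ρ * b j (l+1)` for `0 ≤ j ≤ l + 1`,
and to `(max (n-1) 0 + j, l - j)` with probability `(1 - ρ) * b j l` for `0 ≤ j ≤ l`.
(In `ℕ`, `n - 1` is truncated subtraction, i.e. `max (n-1) 0`.) -/
def kernel (ρ q : ℝ) (s s' : ℕ × ℕ) : ℝ :=
  ρ * ∑ j ∈ Finset.range (s.2 + 2),
        (if s' = (s.1 - 1 + j, s.2 + 1 - j) then binomB q j (s.2 + 1) else 0) +
    (1 - ρ) * ∑ j ∈ Finset.range (s.2 + 1),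
        (if s' = (s.1 - 1 + j, s.2 - j) then binomB q j s.2 else 0)

/-- Bivariate generating function `P(z,y) = Σ_{n,l} P_{n,l} z^n y^l`. -/
def gf (P : ℕ × ℕ → ℝ) (z y : ℂ) : ℂ :=
  ∑' s : ℕ × ℕ, (P s : ℂ) * z ^ s.1 * y ^ s.2

end

lemma binomB_nonneg {q : ℝ} (hq : q ∈ Set.Ioo (0:ℝ) 1) (j l : ℕ) : 0 ≤ binomB q j l := by
  unfold binomB
  split
  · have h1 : (0:ℝ) ≤ 1 - q := by linarith [hq.2]
    exact mul_nonneg (mul_nonneg (Nat.cast_nonneg _) (pow_nonneg h1 _)) (pow_nonneg hq.1.le _)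
  · exact le_refl _

lemma binomB_sum (q : ℝ) (l : ℕ) : ∑ j ∈ Finset.range (l+1), binomB q j l = 1 := by
  have h : ∀ j ∈ Finset.range (l+1), binomB q j l = (1-q)^j * q^(l-j) * (Nat.choose l j : ℝ) := by
    intro j hj
    rw [Finset.mem_range] at hj
    unfold binomB
    rw [if_pos (by omega)]
    ring
  rw [Finset.sum_congr rfl h, ← add_pow]
  norm_num

lemma kernel_nonneg {ρ q : ℝ} (hρ : ρ ∈ Set.Ioo (0:ℝ) 1) (hq : q ∈ Set.Ioo (0:ℝ) 1)
    (s s' : ℕ × ℕ) : 0 ≤ kernel ρ q s s' := by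
  unfold kernel
  have h1 : (0:ℝ) ≤ 1 - ρ := by linarith [hρ.2]
  apply add_nonneg
  · exact mul_nonneg hρ.1.le (Finset.sum_nonneg fun j _ => by
      split
      · exact binomB_nonneg hq _ _
      · exact le_refl _)
  · exact mul_nonneg h1 (Finset.sum_nonneg fun j _ => by
      split
      · exact binomB_nonneg hq _ _
      · exact le_refl _)

/-- Row sum of the kernel against an arbitrary function. -/
lemma kernel_hasSum (ρ q : ℝ) (s : ℕ × ℕ) (f : ℕ × ℕ → ℂ) :
    HasSum (fun s' => (kernel ρ q s s' : ℂ) * f s')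
      ((ρ:ℂ) * ∑ j ∈ Finset.range (s.2+2), (binomB q j (s.2+1) : ℂ) * f (s.1-1+j, s.2+1-j)
        + (1-(ρ:ℂ)) * ∑ j ∈ Finset.range (s.2+1), (binomB q j s.2 : ℂ) * f (s.1-1+j, s.2-j)) := by
  have h1 : ∀ (m : ℕ) (g : ℕ → ℕ × ℕ) (c : ℕ → ℝ),
      HasSum (fun s' : ℕ × ℕ => ∑ j ∈ Finset.range m, (if s' = g j then (c j : ℂ) else 0) * f s')
        (∑ j ∈ Finset.range m, (c j : ℂ) * f (g j)) := by
    intro m g c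
    apply hasSum_sum
    intro j _
    have he : (fun s' : ℕ × ℕ => (if s' = g j then (c j : ℂ) else 0) * f s')
        = fun s' => if s' = g j then (c j : ℂ) * f (g j) else 0 := by
      funext s'
      split_ifs with h
      · rw [h]
      · simp
    rw [he]
    exact hasSum_ite_eq _ _
  have h2 := ((h1 (s.2+2) (fun j => (s.1-1+j, s.2+1-j)) (fun j => binomB q j (s.2+1))).mul_left (ρ:ℂ)).add
    ((h1 (s.2+1) (fun j => (s.1-1+j, s.2-j)) (fun j => binomB q j s.2)).mul_left (1-(ρ:ℂ)))
  have he : (fun s' : ℕ × ℕ => (kernel ρ q s s' : ℂ) * f s')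
      = fun s' => (ρ:ℂ) * ∑ j ∈ Finset.range (s.2+2), (if s' = (s.1-1+j, s.2+1-j) then (binomB q j (s.2+1) : ℂ) else 0) * f s'
        + (1-(ρ:ℂ)) * ∑ j ∈ Finset.range (s.2+1), (if s' = (s.1-1+j, s.2-j) then (binomB q j s.2 : ℂ) else 0) * f s' := by
    funext s'
    simp only [kernel]
    push_cast [apply_ite (fun r : ℝ => (r : ℂ))]
    rw [add_mul, mul_assoc, mul_assoc, Finset.sum_mul, Finset.sum_mul]
  rw [he]
  exact h2

lemma kernel_hasSum_one (ρ q : ℝ) (s : ℕ × ℕ) :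
    HasSum (fun s' => kernel ρ q s s') 1 := by
  rw [← Complex.hasSum_ofReal]
  have h := kernel_hasSum ρ q s (fun _ => 1)
  have e1 : (∑ j ∈ Finset.range (s.2+2), (binomB q j (s.2+1) : ℂ) * 1) = 1 := by
    simp only [mul_one]
    rw [← Complex.ofReal_sum]
    norm_cast
    exact binomB_sum q (s.2+1)
  have e2 : (∑ j ∈ Finset.range (s.2+1), (binomB q j s.2 : ℂ) * 1) = 1 := by
    simp only [mul_one]
    rw [← Complex.ofReal_sum]
    norm_cast
    exact binomB_sum q s.2
  rw [e1, e2] at h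
  simpa using h

lemma kernel_hasSum_pow (ρ q : ℝ) (z : ℂ) (s : ℕ × ℕ) :
    HasSum (fun s' => (kernel ρ q s s' : ℂ) * z ^ (s'.1 + s'.2))
      (((ρ:ℂ) * z + (1 - (ρ:ℂ))) * z ^ (s.1 - 1 + s.2)) := by
  have h := kernel_hasSum ρ q s (fun s' => z ^ (s'.1 + s'.2))
  have e1 : (∑ j ∈ Finset.range (s.2+2), (binomB q j (s.2+1) : ℂ) * z ^ ((s.1-1+j) + (s.2+1-j)))
      = z * z ^ (s.1 - 1 + s.2) := by
    have : ∀ j ∈ Finset.range (s.2+2), (binomB q j (s.2+1) : ℂ) * z ^ ((s.1-1+j) + (s.2+1-j))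
        = (binomB q j (s.2+1) : ℂ) * (z ^ (s.1-1+s.2) * z) := by
      intro j hj
      rw [Finset.mem_range] at hj
      have he : (s.1-1+j) + (s.2+1-j) = (s.1-1+s.2) + 1 := by omega
      rw [he, pow_succ]
    rw [Finset.sum_congr rfl this, ← Finset.sum_mul, ← Complex.ofReal_sum]
    rw [show s.2 + 2 = (s.2+1)+1 from rfl, binomB_sum q (s.2+1)]
    push_cast
    ring
  have e2 : (∑ j ∈ Finset.range (s.2+1), (binomB q j s.2 : ℂ) * z ^ ((s.1-1+j) + (s.2-j)))
      = z ^ (s.1 - 1 + s.2) := by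
    have : ∀ j ∈ Finset.range (s.2+1), (binomB q j s.2 : ℂ) * z ^ ((s.1-1+j) + (s.2-j))
        = (binomB q j s.2 : ℂ) * z ^ (s.1-1+s.2) := by
      intro j hj
      rw [Finset.mem_range] at hj
      have he : (s.1-1+j) + (s.2-j) = s.1-1+s.2 := by omega
      rw [he]
    rw [Finset.sum_congr rfl this, ← Finset.sum_mul, ← Complex.ofReal_sum, binomB_sum q s.2]
    push_cast
    ring
  simp only at h
  rw [e1, e2] at h
  convert h using 1
  ring

theorem stmt1 (ρ q : ℝ) (hρ : ρ ∈ Set.Ioo (0 : ℝ) 1) (hq : q ∈ Set.Ioo (0 : ℝ) 1)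
    (P : ℕ × ℕ → ℝ) (hpos : ∀ s, 0 ≤ P s) (hsum : HasSum P 1)
    (hstat : ∀ s' : ℕ × ℕ, ∑' s : ℕ × ℕ, P s * kernel ρ q s s' = P s')
    (z : ℂ) (hz : ‖z‖ ≤ 1) :
    (1 - (ρ : ℂ)) * gf P z z = (1 - (ρ : ℂ) + (ρ : ℂ) * z) * gf P 0 z := by
  have hk0 : ∀ s s', 0 ≤ kernel ρ q s s' := kernel_nonneg hρ hq
  have krow : ∀ s : ℕ × ℕ, HasSum (fun s' => kernel ρ q s s') 1 := kernel_hasSum_one ρ q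
  have hkle : ∀ s s', kernel ρ q s s' ≤ 1 := fun s s' =>
    le_hasSum (krow s) s' (fun j _ => hk0 s j)
  have hPnorm : ∀ s, ‖(P s : ℂ)‖ = P s := fun s => by
    rw [Complex.norm_real, Real.norm_eq_abs, abs_of_nonneg (hpos s)]
  -- summability helper
  have sumP : ∀ (h : ℕ × ℕ → ℂ), (∀ s, ‖h s‖ ≤ 1) → Summable (fun s => (P s : ℂ) * h s) := by
    intro h hh
    apply Summable.of_norm_bounded hsum.summable
    intro s
    rw [norm_mul, hPnorm s]
    calc P s * ‖h s‖ ≤ P s * 1 := mul_le_mul_of_nonneg_left (hh s) (hpos s)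
      _ = P s := mul_one _
  -- double summability of the real bound
  have hG : Summable (fun p : (ℕ × ℕ) × (ℕ × ℕ) => P p.1 * kernel ρ q p.1 p.2) := by
    have hnn : 0 ≤ fun p : (ℕ × ℕ) × (ℕ × ℕ) => P p.1 * kernel ρ q p.1 p.2 :=
      fun p => mul_nonneg (hpos p.1) (hk0 p.1 p.2)
    rw [summable_prod_of_nonneg hnn]
    constructor
    · intro s
      exact ((krow s).mul_left (P s)).summable
    · apply hsum.summable.congr
      intro s
      rw [((krow s).mul_left (P s)).tsum_eq, mul_one]
  -- the key identity, for every w in the closed unit disk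
  have key : ∀ w : ℂ, ‖w‖ ≤ 1 →
      (w - 1) * ((1 - (ρ:ℂ)) * gf P w w - (1 - (ρ:ℂ) + (ρ:ℂ) * w) * gf P 0 w) = 0 := by
    intro w hw
    have hwn : ∀ n : ℕ, ‖w ^ n‖ ≤ 1 := fun n => by
      rw [norm_pow]
      exact pow_le_one₀ (norm_nonneg _) hw
    set c : ℂ := (ρ:ℂ) * w + (1 - (ρ:ℂ)) with hc
    -- uncurried summability
    have hF : Summable (Function.uncurry
        (fun s s' : ℕ × ℕ => (P s : ℂ) * kernel ρ q s s' * w ^ (s'.1 + s'.2))) := by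
      apply Summable.of_norm_bounded hG
      intro p
      simp only [Function.uncurry]
      rw [norm_mul, norm_mul, hPnorm]
      have h1 : ‖(kernel ρ q p.1 p.2 : ℂ)‖ = kernel ρ q p.1 p.2 := by
        rw [Complex.norm_real, Real.norm_eq_abs, abs_of_nonneg (hk0 _ _)]
      rw [h1]
      calc P p.1 * kernel ρ q p.1 p.2 * ‖w ^ (p.2.1 + p.2.2)‖
          ≤ P p.1 * kernel ρ q p.1 p.2 * 1 :=
            mul_le_mul_of_nonneg_left (hwn _) (mul_nonneg (hpos _) (hk0 _ _))
        _ = P p.1 * kernel ρ q p.1 p.2 := mul_one _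
    -- Step: gf P w w = ∑' s, P s * (c * w ^ (s.1 - 1 + s.2))
    have e0 : gf P w w = ∑' s : ℕ × ℕ, (P s : ℂ) * w ^ (s.1 + s.2) := by
      unfold gf
      apply tsum_congr
      intro s
      rw [pow_add, mul_assoc]
    have hA : gf P w w = ∑' s : ℕ × ℕ, (P s : ℂ) * (c * w ^ (s.1 - 1 + s.2)) := by
      rw [e0]
      have e1 : ∀ s' : ℕ × ℕ, (P s' : ℂ) * w ^ (s'.1 + s'.2)
          = ∑' s : ℕ × ℕ, (P s : ℂ) * kernel ρ q s s' * w ^ (s'.1 + s'.2) := by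
        intro s'
        rw [tsum_mul_right]
        congr 1
        rw [← hstat s', Complex.ofReal_tsum]
        apply tsum_congr
        intro s
        push_cast
        ring
      rw [tsum_congr e1, hF.tsum_comm]
      apply tsum_congr
      intro s
      have := ((kernel_hasSum_pow ρ q w s).mul_left (P s : ℂ)).tsum_eq
      rw [← this]
      apply tsum_congr
      intro s'
      ring
    -- pointwise split
    have hsplit : ∀ s : ℕ × ℕ, w * ((P s : ℂ) * (c * w ^ (s.1 - 1 + s.2)))
        = c * ((P s : ℂ) * w ^ (s.1 + s.2))
          + (c * (w - 1)) * ((P s : ℂ) * (if s.1 = 0 then w ^ s.2 else 0)) := by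
      rintro ⟨n, l⟩
      rcases n with _ | m
      · simp
        ring
      · simp only [Nat.succ_sub_one, if_neg (Nat.succ_ne_zero m), mul_zero]
        have : m + 1 + l = (m + l) + 1 := by omega
        rw [this, pow_succ]
        ring
    -- summabilities of the pieces
    have S1 : Summable (fun s : ℕ × ℕ => (P s : ℂ) * w ^ (s.1 + s.2)) :=
      sumP _ (fun s => hwn _)
    have S2 : Summable (fun s : ℕ × ℕ => (P s : ℂ) * (if s.1 = 0 then w ^ s.2 else 0)) := by
      apply sumP
      intro s
      split
      · exact hwn _
      · simp
    have hB : (∑' s : ℕ × ℕ, (P s : ℂ) * (if s.1 = 0 then w ^ s.2 else 0)) = gf P 0 w := by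
      unfold gf
      apply tsum_congr
      intro s
      rw [zero_pow_eq]
      split
      · ring
      · ring
    have main_eq : w * gf P w w = c * gf P w w + (c * (w - 1)) * gf P 0 w := by
      rw [hA, ← tsum_mul_left]
      rw [tsum_congr hsplit]
      rw [Summable.tsum_add (S1.mul_left c) (S2.mul_left (c * (w - 1)))]
      rw [tsum_mul_left, tsum_mul_left, hB, ← e0, hA]
    rw [hc] at main_eq
    linear_combination main_eq
  by_cases hz1 : z = 1
  · subst hz1
    set Phi : ℂ → ℂ := fun w =>
      (1 - (ρ:ℂ)) * gf P w w - (1 - (ρ:ℂ) + (ρ:ℂ) * w) * gf P 0 w with hPhi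
    have contA : ContinuousOn (fun w : ℂ => gf P w w) (Metric.closedBall (0:ℂ) 1) := by
      simp only [gf]
      apply continuousOn_tsum (u := P)
      · intro s
        apply Continuous.continuousOn
        fun_prop
      · exact hsum.summable
      · intro s w hw
        rw [Metric.mem_closedBall, dist_zero_right] at hw
        rw [norm_mul, norm_mul, hPnorm, norm_pow, norm_pow, mul_assoc]
        have h1 : ‖w‖ ^ s.1 ≤ 1 := pow_le_one₀ (norm_nonneg _) hw
        have h2 : ‖w‖ ^ s.2 ≤ 1 := pow_le_one₀ (norm_nonneg _) hw
        have h3 : ‖w‖ ^ s.1 * ‖w‖ ^ s.2 ≤ 1 :=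
          mul_le_one₀ h1 (pow_nonneg (norm_nonneg _) _) h2
        calc P s * (‖w‖ ^ s.1 * ‖w‖ ^ s.2) ≤ P s * 1 :=
              mul_le_mul_of_nonneg_left h3 (hpos s)
          _ = P s := mul_one _
    have contB : ContinuousOn (fun w : ℂ => gf P 0 w) (Metric.closedBall (0:ℂ) 1) := by
      simp only [gf]
      apply continuousOn_tsum (u := P)
      · intro s
        apply Continuous.continuousOn
        fun_prop
      · exact hsum.summable
      · intro s w hw
        rw [Metric.mem_closedBall, dist_zero_right] at hw
        rw [norm_mul, norm_mul, hPnorm, norm_pow, norm_pow, mul_assoc]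
        have h1 : ‖(0:ℂ)‖ ^ s.1 ≤ 1 := pow_le_one₀ (norm_nonneg _) (by simp)
        have h2 : ‖w‖ ^ s.2 ≤ 1 := pow_le_one₀ (norm_nonneg _) hw
        have h3 : ‖(0:ℂ)‖ ^ s.1 * ‖w‖ ^ s.2 ≤ 1 :=
          mul_le_one₀ h1 (pow_nonneg (norm_nonneg _) _) h2
        calc P s * (‖(0:ℂ)‖ ^ s.1 * ‖w‖ ^ s.2) ≤ P s * 1 :=
              mul_le_mul_of_nonneg_left h3 (hpos s)
          _ = P s := mul_one _
    have contPhi : ContinuousOn Phi (Metric.closedBall (0:ℂ) 1) :=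
      (continuousOn_const.mul contA).sub
        ((continuousOn_const.add (continuousOn_const.mul continuousOn_id)).mul contB)
    set x : ℕ → ℂ := fun k => ((1 - 1/(k+1 : ℝ) : ℝ) : ℂ) with hxdef
    have hxr : Filter.Tendsto (fun k : ℕ => 1 - 1/(k+1 : ℝ)) Filter.atTop (nhds 1) := by
      have h0 := tendsto_one_div_add_atTop_nhds_zero_nat (𝕜 := ℝ)
      have := Filter.Tendsto.sub (tendsto_const_nhds (x := (1:ℝ)) (f := Filter.atTop)) h0
      simpa using this
    have hx1 : Filter.Tendsto x Filter.atTop (nhds (1:ℂ)) := by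
      have := (Complex.continuous_ofReal.tendsto (1:ℝ)).comp hxr
      simpa [hxdef, Function.comp_def] using this
    have hxlt : ∀ k : ℕ, (0:ℝ) < 1/(k+1 : ℝ) := fun k => by positivity
    have hxle : ∀ k : ℕ, 1/(k+1 : ℝ) ≤ 1 := fun k => by
      rw [div_le_one (by positivity)]
      linarith [Nat.cast_nonneg (α := ℝ) k]
    have hx_mem : ∀ k, x k ∈ Metric.closedBall (0:ℂ) 1 := by
      intro k
      rw [Metric.mem_closedBall, dist_zero_right, hxdef]
      simp only [Complex.norm_real, Real.norm_eq_abs]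
      rw [abs_of_nonneg (by linarith [hxle k])]
      linarith [hxlt k]
    have hx_ne : ∀ k, x k ≠ 1 := by
      intro k h
      rw [hxdef] at h
      have h2 : ((1 - 1/(k+1 : ℝ) : ℝ) : ℂ) = ((1:ℝ) : ℂ) := by
        simpa using h
      have : (1 - 1/(k+1 : ℝ)) = 1 := Complex.ofReal_injective h2
      linarith [hxlt k]
    have hPhix : ∀ k, Phi (x k) = 0 := by
      intro k
      have hk := key (x k) (by
        have := hx_mem k
        rwa [Metric.mem_closedBall, dist_zero_right] at this)
      rcases mul_eq_zero.mp hk with h1 | h2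
      · exact absurd (sub_eq_zero.mp h1) (hx_ne k)
      · exact h2
    have h1mem : (1:ℂ) ∈ Metric.closedBall (0:ℂ) 1 := by
      rw [Metric.mem_closedBall, dist_zero_right]
      simp
    have hct : ContinuousWithinAt Phi (Metric.closedBall (0:ℂ) 1) 1 := contPhi 1 h1mem
    have hxw : Filter.Tendsto x Filter.atTop (nhdsWithin (1:ℂ) (Metric.closedBall (0:ℂ) 1)) :=
      tendsto_nhdsWithin_of_tendsto_nhds_of_eventually_within x hx1
        (Filter.Eventually.of_forall hx_mem)
    have hPhilim : Filter.Tendsto (fun k => Phi (x k)) Filter.atTop (nhds (Phi 1)) :=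
      (hct.tendsto).comp hxw
    have hPhilim0 : Filter.Tendsto (fun k => Phi (x k)) Filter.atTop (nhds (0:ℂ)) := by
      simp only [hPhix]
      exact tendsto_const_nhds
    have hPhi1 : Phi 1 = 0 := tendsto_nhds_unique hPhilim hPhilim0
    have := sub_eq_zero.mp hPhi1
    simpa using this
  · have h := key z hz
    rcases mul_eq_zero.mp h with h1 | h2
    · exact absurd (sub_eq_zero.mp h1) hz1
    · exact sub_eq_zero.mp h2
end

section
/- Under the assumptions on F, the first-order coefficient of the power expansion in q is P^(1)(z,y) = ρ(y−z) + ρ(z−1)·(1+ρ(z−1))/(1−ρ). -/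
open scoped BigOperators

noncomputable section

/-- Polynomials in `z` (outer variable) with coefficients polynomials in `y` (inner variable);
this is the ring in which the coefficients `P^(k)(z,y)` live. -/
abbrev Bzy : Type := Polynomial (Polynomial ℂ)

/-- The variable `y` as an element of `Bzy` (the outer variable `Polynomial.X` is `z`). -/
def yB : Bzy := Polynomial.C Polynomial.X

/-- A complex constant as an element of `Bzy`. -/
def cB (c : ℂ) : Bzy := Polynomial.C (Polynomial.C c)

/-- The power series `u = z + q (y - z)` in the variable `q`, with coefficients in `Bzy`. -/
def useries : PowerSeries Bzy :=
  PowerSeries.C (R := Bzy) Polynomial.X + PowerSeries.X * PowerSeries.C (R := Bzy) (yB - Polynomial.X)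

/-- The inclusion of complex constants into `Bzy[[q]]`. -/
def constHom : ℂ →+* PowerSeries Bzy :=
  (PowerSeries.C (R := Bzy)).comp
    ((Polynomial.C : Polynomial ℂ →+* Bzy).comp (Polynomial.C : ℂ →+* Polynomial ℂ))

/-- Substitution of `u = z + q(y-z)` for the variable in a polynomial in `y`. -/
def substY : Polynomial ℂ →+* PowerSeries Bzy :=
  Polynomial.eval₂RingHom constHom useries

/-- Substitution `z ↦ z`, `y ↦ u = z + q(y-z)` in a polynomial in `z` and `y`. -/
def substZY : Bzy →+* PowerSeries Bzy :=
  Polynomial.eval₂RingHom substY (PowerSeries.C (R := Bzy) Polynomial.X)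

/-- The formal functional equation `z·F(z,y) = (1-ρ+ρu)·[(z-1)·F(0,u) + F(z,u)]`, where
`F = Σ_k q^k P^(k)(z,y)`, `F(0,u)` is obtained by setting `z = 0` (i.e. taking the coefficient
of `z^0`) and substituting `u` for `y`, and `F(z,u)` by substituting `u` for `y`; the `m`-th
coefficient of `F(z,u)` is `Σ_{k ≤ m} [q^(m-k)] (P^(k)(z, z + q(y-z)))`, and similarly
for `F(0,u)`. -/
def FuncEq (ρ : ℝ) (P : ℕ → Bzy) : Prop :=
  PowerSeries.C (R := Bzy) Polynomial.X * PowerSeries.mk (fun k => P k) =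
    (constHom (1 - (ρ : ℂ)) + constHom (ρ : ℂ) * useries) *
      (PowerSeries.C (R := Bzy) (Polynomial.X - 1) *
          PowerSeries.mk (fun m => ∑ k ∈ Finset.range (m + 1),
            PowerSeries.coeff (R := Bzy) (m - k) (substY ((P k).coeff 0))) +
        PowerSeries.mk (fun m => ∑ k ∈ Finset.range (m + 1),
          PowerSeries.coeff (R := Bzy) (m - k) (substZY (P k))))

/-- `P^(0)(z,y)` does not depend on `y`. -/
def IndepY (P : ℕ → Bzy) : Prop := ∀ n : ℕ, ∃ c : ℂ, (P 0).coeff n = Polynomial.C c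

/-- Boundary conditions: `P^(0)(0,1) = 1 - ρ` and `P^(k)(0,1) = 0` for all `k ≥ 1`. -/
def Boundary (ρ : ℝ) (P : ℕ → Bzy) : Prop :=
  ((P 0).coeff 0).eval 1 = 1 - (ρ : ℂ) ∧ ∀ k : ℕ, 1 ≤ k → ((P k).coeff 0).eval 1 = 0

/-- Derivative with respect to the inner variable `y`. -/
def dy (p : Bzy) : Bzy :=
  p.sum fun n a => Polynomial.C (Polynomial.derivative a) * Polynomial.X ^ n

/-- The polynomial `P^(k)(0,y) + (P^(k)(z,y) - P^(k)(0,y))/z`, where the quotient is exact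
polynomial division by the monic polynomial `z`. -/
def bracket (P : ℕ → Bzy) (k : ℕ) : Bzy :=
  Polynomial.C ((P k).coeff 0) + (P k - Polynomial.C ((P k).coeff 0)) /ₘ Polynomial.X

/-- `a_j^k(z) = ∂_y^j [P^(k)(0,y) + (P^(k)(z,y) - P^(k)(0,y))/z] |_{y=z}`, a polynomial
in the single variable `z`. -/
def aCoef (P : ℕ → Bzy) (j k : ℕ) : Polynomial ℂ :=
  Polynomial.eval₂ (RingHom.id (Polynomial ℂ)) Polynomial.X ((dy^[j]) (bracket P k))

/-- Reinterpret a polynomial in the single variable `z` as an element of `Bzy`. -/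
def embZ : Polynomial ℂ →+* Bzy := Polynomial.mapRingHom (Polynomial.C : ℂ →+* Polynomial ℂ)

/-- `A_j^k(z) = jρ a_{j-1}^{k-j}(z) + (1+ρ(z-1)) a_j^{k-j}(z)` for `1 ≤ j ≤ k`,
`A_0^0(z) = 1 + ρ(z-1)`, and `A_j^k(z) = 0` otherwise. -/
def Acoef (ρ : ℝ) (P : ℕ → Bzy) (j k : ℕ) : Polynomial ℂ :=
  if 1 ≤ j ∧ j ≤ k then
    (j : Polynomial ℂ) * Polynomial.C (ρ : ℂ) * aCoef P (j - 1) (k - j) +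
      (1 + Polynomial.C (ρ : ℂ) * (Polynomial.X - 1)) * aCoef P j (k - j)
  else if j = 0 ∧ k = 0 then 1 + Polynomial.C (ρ : ℂ) * (Polynomial.X - 1)
  else 0

end

noncomputable section Aux
open Polynomial PowerSeries

/-- substitute `z` for `y` (identify inner variable with outer): `P(z,y) ↦ P(z,z)`. -/
def diagQ : Bzy →+* Polynomial ℂ :=
  Polynomial.eval₂RingHom (RingHom.id (Polynomial ℂ)) Polynomial.X

@[simp] lemma embZ_C (a : ℂ) : embZ (Polynomial.C a) = cB a := by
  simp [embZ, cB]

@[simp] lemma embZ_X : embZ Polynomial.X = (Polynomial.X : Bzy) := by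
  simp [embZ]

lemma embZ_injective : Function.Injective embZ :=
  Polynomial.map_injective _ Polynomial.C_injective

@[simp] lemma diagQ_embZ (p : Polynomial ℂ) : diagQ (embZ p) = p := by
  show Polynomial.eval₂ _ _ (p.map Polynomial.C) = p
  rw [Polynomial.eval₂_map]
  exact Polynomial.eval₂_C_X

@[simp] lemma diagQ_C (a : Polynomial ℂ) : diagQ (Polynomial.C a) = a :=
  Polynomial.eval₂_C _ _

@[simp] lemma diagQ_X : diagQ (Polynomial.X : Bzy) = Polynomial.X :=
  Polynomial.eval₂_X _ _

@[simp] lemma diagQ_yB : diagQ yB = Polynomial.X := diagQ_C _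

@[simp] lemma diagQ_cB (a : ℂ) : diagQ (cB a) = Polynomial.C a := diagQ_C _

@[simp] lemma constHom_apply (a : ℂ) : constHom a = PowerSeries.C (R := Bzy) (cB a) := rfl

@[simp] lemma constantCoeff_useries :
    PowerSeries.constantCoeff (R := Bzy) useries = Polynomial.X := by
  simp [useries]

@[simp] lemma coeff_one_useries :
    PowerSeries.coeff (R := Bzy) 1 useries = yB - Polynomial.X := by
  have h : (PowerSeries.X * PowerSeries.C (R := Bzy) (yB - Polynomial.X)) =
      PowerSeries.C (R := Bzy) (yB - Polynomial.X) * PowerSeries.X := mul_comm _ _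
  rw [useries, map_add, h]
  simp [PowerSeries.coeff_C, PowerSeries.coeff_succ_mul_X]

lemma constantCoeff_substY (p : Polynomial ℂ) :
    PowerSeries.constantCoeff (R := Bzy) (substY p) = embZ p := by
  show PowerSeries.constantCoeff (R := Bzy) (Polynomial.eval₂ constHom useries p) = embZ p
  rw [Polynomial.hom_eval₂]
  have h1 : (PowerSeries.constantCoeff (R := Bzy)).comp constHom
      = (Polynomial.C : Polynomial ℂ →+* Bzy).comp (Polynomial.C : ℂ →+* Polynomial ℂ) := by
    ext a; simp [cB]
  rw [h1, constantCoeff_useries]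
  rfl

lemma constantCoeff_substZY (p : Bzy) :
    PowerSeries.constantCoeff (R := Bzy) (substZY p) = embZ (diagQ p) := by
  show PowerSeries.constantCoeff (R := Bzy) (Polynomial.eval₂ substY (PowerSeries.C (R := Bzy) Polynomial.X) p)
      = embZ (diagQ p)
  rw [Polynomial.hom_eval₂]
  have h1 : (PowerSeries.constantCoeff (R := Bzy)).comp substY = embZ :=
    RingHom.ext constantCoeff_substY
  rw [h1, PowerSeries.constantCoeff_C]
  show _ = embZ (Polynomial.eval₂ (RingHom.id (Polynomial ℂ)) Polynomial.X p)
  rw [Polynomial.hom_eval₂, RingHom.comp_id, embZ_X]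

@[simp] lemma substY_C (a : ℂ) : substY (Polynomial.C a) = constHom a :=
  Polynomial.eval₂_C _ _

lemma substZY_embZ (p : Polynomial ℂ) :
    substZY (embZ p) = PowerSeries.C (R := Bzy) (embZ p) := by
  show Polynomial.eval₂ substY (PowerSeries.C (R := Bzy) Polynomial.X) (p.map Polynomial.C)
      = PowerSeries.C (R := Bzy) (embZ p)
  rw [Polynomial.eval₂_map]
  have : embZ p = Polynomial.eval₂ ((Polynomial.C : Polynomial ℂ →+* Bzy).comp
      (Polynomial.C : ℂ →+* Polynomial ℂ)) Polynomial.X p := rfl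
  rw [this, Polynomial.hom_eval₂]
  congr 1
  ext a : 1
  simp [cB]

lemma coeff_one_mul (φ ψ : PowerSeries Bzy) :
    PowerSeries.coeff (R := Bzy) 1 (φ * ψ) =
      PowerSeries.constantCoeff (R := Bzy) φ * PowerSeries.coeff (R := Bzy) 1 ψ +
        PowerSeries.coeff (R := Bzy) 1 φ * PowerSeries.constantCoeff (R := Bzy) ψ := by
  rw [PowerSeries.coeff_mul]
  have h : (Finset.HasAntidiagonal.antidiagonal 1 : Finset (ℕ × ℕ)) = {(0, 1), (1, 0)} := rfl
  rw [h, Finset.sum_insert (by decide), Finset.sum_singleton]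
  simp [PowerSeries.coeff_zero_eq_constantCoeff]

end Aux

theorem stmt11 (ρ : ℝ) (hρ : ρ ∈ Set.Ioo (0 : ℝ) 1) (P : ℕ → Bzy)
    (hF : FuncEq ρ P) (hI : IndepY P) (hB : Boundary ρ P) :
    P 1 = cB (ρ : ℂ) * (yB - Polynomial.X) +
      cB (ρ : ℂ) * (Polynomial.X - 1) * (1 + cB (ρ : ℂ) * (Polynomial.X - 1)) *
        cB ((1 - (ρ : ℂ))⁻¹) := by
  have hρc : (1 : ℂ) - (ρ : ℂ) ≠ 0 := by
    have h1 : ((1 - ρ : ℝ) : ℂ) ≠ 0 := by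
      exact_mod_cast ne_of_gt (by linarith [hρ.2] : (0:ℝ) < 1 - ρ)
    simpa using h1
  have hXone : (Polynomial.X - 1 : Polynomial ℂ) ≠ 0 := by
    simpa using Polynomial.X_sub_C_ne_zero (1 : ℂ)
  have hCne : (1 - Polynomial.C (ρ:ℂ) : Polynomial ℂ) ≠ 0 := by
    rw [show (1 - Polynomial.C (ρ:ℂ) : Polynomial ℂ) = Polynomial.C (1 - (ρ:ℂ)) by simp]
    exact Polynomial.C_ne_zero.mpr hρc
  have hne : ((1 - Polynomial.C (ρ:ℂ)) * (Polynomial.X - 1) : Polynomial ℂ) ≠ 0 :=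
    mul_ne_zero hCne hXone
  unfold FuncEq at hF
  -- order 0
  have h0 := congrArg (PowerSeries.constantCoeff (R := Bzy)) hF
  simp only [zero_add, map_mul, map_add, PowerSeries.constantCoeff_C, PowerSeries.constantCoeff_mk,
    Finset.sum_range_one, Finset.sum_range_zero, Nat.sub_zero, PowerSeries.coeff_zero_eq_constantCoeff,
    constantCoeff_substY, constantCoeff_substZY, constHom_apply, constantCoeff_useries] at h0
  set p0 : Polynomial ℂ := (P 0).map (Polynomial.evalRingHom 0) with hp0def
  have hP0 : P 0 = embZ p0 := by
    show P 0 = ((P 0).map (Polynomial.evalRingHom 0)).map Polynomial.C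
    rw [Polynomial.map_map]
    ext n
    rw [Polynomial.coeff_map]
    obtain ⟨c, hc⟩ := hI n
    simp [hc]
  have hcoeff0 : (P 0).coeff 0 = Polynomial.C (p0.coeff 0) := by
    rw [hP0]
    exact Polynomial.coeff_map _ 0
  have hb0 : p0.coeff 0 = 1 - (ρ : ℂ) := by
    have h := hB.1
    rw [hcoeff0] at h
    simpa using h
  have hemb0 : ∀ p : Polynomial ℂ, (embZ p).coeff 0 = Polynomial.C (p.coeff 0) := fun p =>
    Polynomial.coeff_map _ 0
  have hcBsub : cB (1 - (ρ:ℂ)) = 1 - cB (ρ:ℂ) := by simp [cB]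
  rw [hP0, hemb0, diagQ_embZ, hcBsub] at h0
  have h0' : embZ (Polynomial.X * p0)
      = embZ (((1 - Polynomial.C (ρ:ℂ)) + Polynomial.C (ρ:ℂ) * Polynomial.X) *
          ((Polynomial.X - 1) * Polynomial.C (p0.coeff 0) + p0)) := by
    simpa [map_mul, map_add, map_sub, map_one] using h0
  have e0 := embZ_injective h0'
  have hC : Polynomial.C (1 - (ρ:ℂ)) = 1 - Polynomial.C (ρ:ℂ) := by simp
  have hl : p0 = 1 + Polynomial.C (ρ:ℂ) * (Polynomial.X - 1) := by
    rw [hb0, hC] at e0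
    have key : ((1 - Polynomial.C (ρ:ℂ)) * (Polynomial.X - 1)) * p0
        = ((1 - Polynomial.C (ρ:ℂ)) * (Polynomial.X - 1)) *
          (1 + Polynomial.C (ρ:ℂ) * (Polynomial.X - 1)) := by
      linear_combination e0
    exact mul_left_cancel₀ hne key
  rw [hl] at hP0 hcoeff0 hb0
  rw [hb0] at hcoeff0
  -- order 1
  have h1 := congrArg (PowerSeries.coeff (R := Bzy) 1) hF
  rw [PowerSeries.coeff_C_mul, PowerSeries.coeff_mk, coeff_one_mul] at h1
  simp only [map_mul, map_add, PowerSeries.constantCoeff_C, PowerSeries.constantCoeff_mk,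
    PowerSeries.coeff_C_mul, PowerSeries.coeff_mk, Finset.sum_range_one, Finset.sum_range_succ, Finset.sum_range_zero,
    Nat.sub_zero, zero_add, Nat.sub_self, PowerSeries.coeff_zero_eq_constantCoeff,
    constantCoeff_substY, constantCoeff_substZY, constHom_apply, constantCoeff_useries,
    coeff_one_useries, PowerSeries.coeff_C, one_ne_zero, if_false, zero_add, add_zero,
    zero_mul, mul_zero, PowerSeries.constantCoeff_X] at h1
  rw [hcoeff0, hP0, substY_C, substZY_embZ] at h1
  simp only [constHom_apply, PowerSeries.coeff_C, one_ne_zero, if_false, zero_add, add_zero,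
    mul_zero, zero_mul, diagQ_embZ, Finset.sum_range_zero, embZ_C, hcBsub] at h1
  have hBX : ((Polynomial.X - 1) * (1 - cB (ρ:ℂ)) +
      embZ (1 + Polynomial.C (ρ:ℂ) * (Polynomial.X - 1))) = (Polynomial.X : Bzy) := by
    simp only [map_add, map_mul, map_sub, map_one, embZ_C, embZ_X]
    ring
  have hA0 : (1 - cB (ρ:ℂ) + cB (ρ:ℂ) * Polynomial.X : Bzy)
      = embZ (1 + Polynomial.C (ρ:ℂ) * (Polynomial.X - 1)) := by
    simp only [map_add, map_mul, map_sub, map_one, embZ_C, embZ_X]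
    ring
  rw [hBX, hA0] at h1
  have h1' : Polynomial.X * (P 1 - cB (ρ:ℂ) * (yB - Polynomial.X))
      = embZ (1 + Polynomial.C (ρ:ℂ) * (Polynomial.X - 1)) *
          ((Polynomial.X - 1) * embZ ((P 1).coeff 0) + embZ (diagQ (P 1))) := by
    linear_combination h1
  have hr : Polynomial.X * (P 1 - cB (ρ:ℂ) * (yB - Polynomial.X))
      = embZ ((1 + Polynomial.C (ρ:ℂ) * (Polynomial.X - 1)) *
          ((Polynomial.X - 1) * (P 1).coeff 0 + diagQ (P 1))) := by
    rw [h1']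
    simp only [map_add, map_mul, map_sub, map_one, embZ_X]
  have hr0 : ((1 + Polynomial.C (ρ:ℂ) * (Polynomial.X - 1)) *
      ((Polynomial.X - 1) * (P 1).coeff 0 + diagQ (P 1))).coeff 0 = 0 := by
    have h2 := congrArg (fun p : Bzy => p.coeff 0) hr
    simp only [Polynomial.mul_coeff_zero, Polynomial.coeff_X_zero, zero_mul, hemb0] at h2
    rw [Polynomial.mul_coeff_zero]
    exact Polynomial.C_eq_zero.mp h2.symm
  obtain ⟨s, hs⟩ := Polynomial.X_dvd_iff.mpr hr0
  have hP1 : P 1 = cB (ρ:ℂ) * (yB - Polynomial.X) + embZ s := by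
    have h3 : Polynomial.X * (P 1 - cB (ρ:ℂ) * (yB - Polynomial.X))
        = Polynomial.X * embZ s := by
      rw [hr, hs, map_mul, embZ_X]
    have h4 := mul_left_cancel₀ Polynomial.X_ne_zero h3
    linear_combination h4
  have hq1 : (P 1).coeff 0
      = Polynomial.C (ρ:ℂ) * Polynomial.X + Polynomial.C (s.coeff 0) := by
    rw [hP1]
    simp [cB, yB, hemb0, mul_sub]
  have hdg : diagQ (P 1) = s := by
    rw [hP1]
    simp
  have hs0 : s.coeff 0 = -(ρ:ℂ) := by
    have h5 := hB.2 1 le_rfl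
    rw [hq1] at h5
    simp at h5
    linear_combination h5
  rw [hq1, hdg, hs0, map_neg] at hs
  have hinv : (1 - Polynomial.C (ρ:ℂ)) * Polynomial.C ((1 - (ρ:ℂ))⁻¹) = 1 := by
    rw [← hC, ← map_mul, mul_inv_cancel₀ hρc, map_one]
  have hsval : s = Polynomial.C (ρ:ℂ) * (Polynomial.X - 1) *
      (1 + Polynomial.C (ρ:ℂ) * (Polynomial.X - 1)) * Polynomial.C ((1 - (ρ:ℂ))⁻¹) := by
    have key2 : ((1 - Polynomial.C (ρ:ℂ)) * (Polynomial.X - 1)) * s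
        = ((1 - Polynomial.C (ρ:ℂ)) * (Polynomial.X - 1)) *
          (Polynomial.C (ρ:ℂ) * (Polynomial.X - 1) *
            (1 + Polynomial.C (ρ:ℂ) * (Polynomial.X - 1)) *
              Polynomial.C ((1 - (ρ:ℂ))⁻¹)) := by
      linear_combination (-1 : Polynomial ℂ) * hs - Polynomial.C (ρ:ℂ) *
        (1 + Polynomial.C (ρ:ℂ) * (Polynomial.X - 1)) * (Polynomial.X - 1)^2 * hinv
    exact mul_left_cancel₀ hne key2
  rw [hP1, hsval]
  simp only [map_mul, map_add, map_sub, map_one, embZ_C, embZ_X]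
  try ring
end
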